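/- Let β ≥ 0 and let θ : ℕ → ℝ satisfy θ_i ≥ 0 for all i and Σ_i θ_i² < ∞, and let g(t) = (β/2)t² + Σ_i (θ_i t − log(1 + θ_i t)) for t ≥ 0. Then g is differentiable on (0, ∞) with g'(t) = β t + Σ_i θ_i² t / (1 + θ_i t), and g' is in turn differentiable on (0, ∞) with g''(t) = β + Σ_i θ_i² / (1 + θ_i t)², both series being summable for every t > 0. -/

import Mathlib

private lemma log_lower (x : ℝ) (hx : 0 ≤ x) : x / (1 + x) ≤ Real.log (1 + x) := by
  have h1 : (0:ℝ) < 1 + x := by linarith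
  have h := Real.log_le_sub_one_of_pos (x := (1 + x)⁻¹) (by positivity)
  rw [Real.log_inv] at h
  have : (1 + x)⁻¹ - 1 = -(x / (1 + x)) := by field_simp; ring
  linarith [this ▸ h]

private lemma term_deriv (a t : ℝ) (ha : 0 ≤ a) (ht : 0 < t) :
    HasDerivAt (fun s : ℝ => a * s - Real.log (1 + a * s))
      (a ^ 2 * t / (1 + a * t)) t := by
  have h1 : (0:ℝ) < 1 + a * t := by positivity
  have hlin : HasDerivAt (fun s : ℝ => 1 + a * s) a t := by
    simpa using ((hasDerivAt_id t).const_mul a).const_add 1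
  have hlog : HasDerivAt (fun s : ℝ => Real.log (1 + a * s)) (a / (1 + a * t)) t :=
    hlin.log h1.ne'
  have := (((hasDerivAt_id t).const_mul a)).sub hlog
  refine this.congr_deriv ?_
  field_simp
  ring

private lemma term_deriv2 (a t : ℝ) (ha : 0 ≤ a) (ht : 0 < t) :
    HasDerivAt (fun s : ℝ => a ^ 2 * s / (1 + a * s))
      (a ^ 2 / (1 + a * t) ^ 2) t := by
  have h1 : (0:ℝ) < 1 + a * t := by positivity
  have hnum : HasDerivAt (fun s : ℝ => a ^ 2 * s) (a ^ 2) t := by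
    simpa using (hasDerivAt_id t).const_mul (a ^ 2)
  have hden : HasDerivAt (fun s : ℝ => 1 + a * s) a t := by
    simpa using ((hasDerivAt_id t).const_mul a).const_add 1
  have := hnum.div hden h1.ne'
  refine this.congr_deriv ?_
  congr 1
  ring

/-- For `β ≥ 0` and nonnegative `θ` with `∑ θ i ^ 2 < ∞`, the function
`g(t) = (β/2) t² + ∑' i, (θ i t − log (1 + θ i t))` is differentiable on `(0, ∞)` with
`g'(t) = β t + ∑' i, θ i ² t / (1 + θ i t)`, and `g'` is differentiable on `(0, ∞)` with
`g''(t) = β + ∑' i, θ i ² / (1 + θ i t)²`, both series being summable for every `t > 0`. -/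
theorem g_hasDerivAt_and_second_deriv
    (β : ℝ) (hβ : 0 ≤ β) (θ : ℕ → ℝ) (hθ : ∀ i, 0 ≤ θ i)
    (hθ2 : Summable fun i => (θ i) ^ 2) :
    ∀ t : ℝ, 0 < t →
      (Summable fun i => (θ i) ^ 2 * t / (1 + θ i * t)) ∧
      (Summable fun i => (θ i) ^ 2 / (1 + θ i * t) ^ 2) ∧
      HasDerivAt
        (fun s : ℝ => β / 2 * s ^ 2 + ∑' i, (θ i * s - Real.log (1 + θ i * s)))
        (β * t + ∑' i, (θ i) ^ 2 * t / (1 + θ i * t)) t ∧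
      HasDerivAt
        (fun s : ℝ => β * s + ∑' i, (θ i) ^ 2 * s / (1 + θ i * s))
        (β + ∑' i, (θ i) ^ 2 / (1 + θ i * t) ^ 2) t := by
  intro t ht
  have hden : ∀ (i : ℕ) (x : ℝ), 0 < x → (0:ℝ) < 1 + θ i * x := fun i x hx => by
    have := hθ i; positivity
  -- summability of the first-derivative series at any point x > 0
  have hsum1 : ∀ x : ℝ, 0 < x → Summable fun i => (θ i) ^ 2 * x / (1 + θ i * x) := by
    intro x hx
    refine Summable.of_nonneg_of_le
      (fun i => div_nonneg (by positivity) (hden i x hx).le) (fun i => ?_)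
      (hθ2.mul_right x)
    rw [div_le_iff₀ (hden i x hx)]
    nlinarith [mul_nonneg (mul_nonneg (mul_nonneg (sq_nonneg (θ i)) (hθ i)) hx.le) hx.le]
  have hsum2 : Summable fun i => (θ i) ^ 2 / (1 + θ i * t) ^ 2 := by
    refine Summable.of_nonneg_of_le
      (fun i => div_nonneg (sq_nonneg _) (sq_nonneg _)) (fun i => ?_) hθ2
    have h1 := hden i t ht
    rw [div_le_iff₀ (by positivity)]
    nlinarith [mul_nonneg (mul_nonneg (sq_nonneg (θ i)) (hθ i)) ht.le,
      mul_nonneg (sq_nonneg (θ i)) (sq_nonneg (θ i * t))]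
  refine ⟨hsum1 t ht, hsum2, ?_, ?_⟩
  · -- first derivative
    have hpoly : HasDerivAt (fun s : ℝ => β / 2 * s ^ 2) (β * t) t := by
      have := (hasDerivAt_pow 2 t).const_mul (β / 2)
      refine this.congr_deriv ?_; push_cast; ring
    have htsum : HasDerivAt (fun s : ℝ => ∑' i, (θ i * s - Real.log (1 + θ i * s)))
        (∑' i, (θ i) ^ 2 * t / (1 + θ i * t)) t := by
      refine hasDerivAt_tsum_of_isPreconnected
        (u := fun i => (θ i) ^ 2 * (2 * t)) (hθ2.mul_right (2 * t))
        isOpen_Ioo (g := fun i s => θ i * s - Real.log (1 + θ i * s))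
        (g' := fun i s => (θ i) ^ 2 * s / (1 + θ i * s))
        (isPreconnected_Ioo (a := (0:ℝ)) (b := 2 * t))
        (fun i y hy => term_deriv (θ i) y (hθ i) hy.1)
        (fun i y hy => ?_) (y₀ := t) ⟨ht, by linarith⟩ ?_ ⟨ht, by linarith⟩
      · have hy0 := hy.1
        have hy2 : y ≤ 2 * t := hy.2.le
        have h1 := hden i y hy0
        show ‖θ i ^ 2 * y / (1 + θ i * y)‖ ≤ θ i ^ 2 * (2 * t)
        rw [Real.norm_eq_abs,
          abs_of_nonneg (div_nonneg (by positivity) h1.le), div_le_iff₀ h1]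
        nlinarith [mul_le_mul_of_nonneg_left hy2 (sq_nonneg (θ i)),
          mul_nonneg (mul_nonneg (mul_nonneg (sq_nonneg (θ i)) (by linarith : (0:ℝ) ≤ 2 * t))
            (hθ i)) hy0.le]
      · -- summability of the series of functions at t
        refine Summable.of_nonneg_of_le (fun i => ?_) (fun i => ?_) (hθ2.mul_right (t ^ 2))
        · have h1 := hden i t ht
          have hlog : Real.log (1 + θ i * t) ≤ θ i * t :=
            by have := Real.log_le_sub_one_of_pos h1; linarith
          show (0:ℝ) ≤ θ i * t - Real.log (1 + θ i * t)
          linarith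
        · have h1 := hden i t ht
          have hlb := log_lower (θ i * t) (mul_nonneg (hθ i) ht.le)
          show θ i * t - Real.log (1 + θ i * t) ≤ θ i ^ 2 * t ^ 2
          have key : θ i * t - Real.log (1 + θ i * t) ≤ (θ i * t) ^ 2 / (1 + θ i * t) := by
            have : θ i * t - θ i * t / (1 + θ i * t) = (θ i * t) ^ 2 / (1 + θ i * t) := by
              field_simp; ring
            linarith [this ▸ sub_le_sub_left hlb (θ i * t)]
          refine key.trans ?_
          rw [div_le_iff₀ h1]
          nlinarith [mul_nonneg (mul_nonneg (mul_nonneg (sq_nonneg (θ i)) (sq_nonneg t))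
            (hθ i)) ht.le]
    exact hpoly.add htsum
  · -- second derivative
    have hpoly : HasDerivAt (fun s : ℝ => β * s) β t := by
      simpa using (hasDerivAt_id t).const_mul β
    have htsum : HasDerivAt (fun s : ℝ => ∑' i, (θ i) ^ 2 * s / (1 + θ i * s))
        (∑' i, (θ i) ^ 2 / (1 + θ i * t) ^ 2) t := by
      refine hasDerivAt_tsum_of_isPreconnected
        (u := fun i => (θ i) ^ 2) hθ2
        isOpen_Ioo (g := fun i s => (θ i) ^ 2 * s / (1 + θ i * s))
        (g' := fun i s => (θ i) ^ 2 / (1 + θ i * s) ^ 2)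
        (isPreconnected_Ioo (a := (0:ℝ)) (b := 2 * t))
        (fun i y hy => term_deriv2 (θ i) y (hθ i) hy.1)
        (fun i y hy => ?_) (y₀ := t) ⟨ht, by linarith⟩ (hsum1 t ht) ⟨ht, by linarith⟩
      have h1 := hden i y hy.1
      show ‖θ i ^ 2 / (1 + θ i * y) ^ 2‖ ≤ θ i ^ 2
      rw [Real.norm_eq_abs, abs_of_nonneg (div_nonneg (sq_nonneg _) (sq_nonneg _)),
        div_le_iff₀ (by positivity)]
      nlinarith [mul_nonneg (mul_nonneg (sq_nonneg (θ i)) (hθ i)) hy.1.le,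
        mul_nonneg (sq_nonneg (θ i)) (sq_nonneg (θ i * y))]
    exact hpoly.add htsum
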